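/- For a linear difference equation Σ_{k=0}^r a_k(n) x(n+k) = 0 (for all n ∈ ℤ) with arbitrary sequence coefficients a_0,...,a_r : ℤ → ℂ, the solution space is infinite-dimensional over ℂ if and only if the equation has a lacunary solution. -/

import Mathlib

/-- `x` is a solution of the linear difference equation with coefficients `a 0, ..., a r`. -/
def IsSol (r : ℕ) (a : ℕ → ℤ → ℂ) (x : ℤ → ℂ) : Prop :=
  ∀ n : ℤ, ∑ k ∈ Finset.range (r + 1), a k n * x (n + k) = 0

/-- The space of solutions of the linear difference equation. -/
noncomputable def solSpace (r : ℕ) (a : ℕ → ℤ → ℂ) : Submodule ℂ (ℤ → ℂ) where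
  carrier := {x | IsSol r a x}
  add_mem' := by
    intro x y hx hy n
    simp only [Pi.add_apply, mul_add, Finset.sum_add_distrib, hx n, hy n, add_zero]
  zero_mem' := by intro n; simp
  smul_mem' := by
    intro c x hx n
    simp only [Pi.smul_apply, smul_eq_mul, mul_left_comm, ← Finset.mul_sum, hx n, mul_zero]

/-- Sequences vanishing on a set `s`. -/
noncomputable def vanishOn (s : Set ℤ) : Submodule ℂ (ℤ → ℂ) where
  carrier := {x | ∀ n ∈ s, x n = 0}
  add_mem' := by intro x y hx hy n hn; simp [hx n hn, hy n hn]
  zero_mem' := by intro n _; simp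
  smul_mem' := by intro c x hx n hn; simp [hx n hn]

/-- A sequence is lacunary if the gaps between consecutive support elements are unbounded. -/
def Lacunary (x : ℤ → ℂ) : Prop :=
  ∀ L : ℤ, ∃ i j : ℤ, x i ≠ 0 ∧ x j ≠ 0 ∧ i < j ∧ L < j - i ∧
    ∀ k : ℤ, i < k → k < j → x k = 0

set_option synthInstance.maxHeartbeats 1000000
set_option maxHeartbeats 1000000
set_option linter.unusedVariables false

/-- Truncation of a solution at a place where it has `r` consecutive zeros. -/
lemma isSol_trunc {r : ℕ} {a : ℕ → ℤ → ℂ} {x : ℤ → ℂ} (hx : IsSol r a x) (p : ℤ)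
    (h0 : ∀ n : ℤ, p ≤ n → n < p + r → x n = 0) :
    IsSol r a (fun n => if n < p then x n else 0) := by
  intro n
  by_cases hn : n < p
  · have he : ∀ k ∈ Finset.range (r+1),
        a k n * (if n + (k:ℤ) < p then x (n+k) else 0) = a k n * x (n + k) := by
      intro k hk
      by_cases h : n + (k:ℤ) < p
      · simp [h]
      · push_neg at h
        have hk' : (k:ℤ) ≤ r := by
          exact_mod_cast Nat.lt_succ_iff.mp (Finset.mem_range.mp hk)
        have hz : x (n + k) = 0 := h0 _ h (by linarith)
        rw [if_neg (not_lt.mpr h), hz, mul_zero]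
    rw [Finset.sum_congr rfl he]
    exact hx n
  · push_neg at hn
    apply Finset.sum_eq_zero
    intro k _
    have hk0 : (0:ℤ) ≤ k := Int.natCast_nonneg k
    have : ¬ (n + (k:ℤ) < p) := by push_neg; linarith
    simp [this]

/-- Mirrored coefficients. -/
def mirC (r : ℕ) (a : ℕ → ℤ → ℂ) : ℕ → ℤ → ℂ := fun k n => a (r - k) (-n - (r:ℤ))

lemma isSol_congr {r : ℕ} {A a : ℕ → ℤ → ℂ} {x : ℤ → ℂ}
    (h : ∀ k ≤ r, ∀ n, A k n = a k n) (hx : IsSol r A x) : IsSol r a x := by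
  intro n
  rw [← hx n]
  refine Finset.sum_congr rfl fun k hk => ?_
  rw [h k (Nat.lt_succ_iff.mp (Finset.mem_range.mp hk))]

lemma isSol_mir {r : ℕ} {a : ℕ → ℤ → ℂ} {x : ℤ → ℂ} (hx : IsSol r a x) :
    IsSol r (mirC r a) (fun n => x (-n)) := by
  intro n
  have h := hx (-n - r)
  rw [← Finset.sum_range_reflect] at h
  rw [← h]
  refine Finset.sum_congr rfl fun k hk => ?_
  have hk' : k ≤ r := Nat.lt_succ_iff.mp (Finset.mem_range.mp hk)
  have hc : ((r - k : ℕ) : ℤ) = (r : ℤ) - k := by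
    exact_mod_cast Int.ofNat_sub hk'
  have harg : (-n - (r:ℤ)) + ((r - k : ℕ) : ℤ) = -(n + k) := by rw [hc]; ring
  simp only [mirC, Nat.add_sub_cancel]
  rw [← harg]

lemma isSol_unmir {r : ℕ} {a : ℕ → ℤ → ℂ} {y : ℤ → ℂ} (hy : IsSol r (mirC r a) y) :
    IsSol r a (fun n => y (-n)) := by
  have h2 := isSol_mir hy
  refine isSol_congr (A := mirC r (mirC r a)) ?_ h2
  intro k hk n
  simp only [mirC]
  congr 1
  · omega
  · ring

/-- Triangular families of sequences are linearly independent. -/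
lemma linearIndependent_triangular {ι : Type*} (v : ι → ℤ → ℂ) (pt : ι → ℤ)
    (hinj : Function.Injective pt)
    (hdiag : ∀ m, v m (pt m) ≠ 0)
    (htri : ∀ m m', pt m < pt m' → v m (pt m') = 0) :
    LinearIndependent ℂ v := by
  classical
  rw [linearIndependent_iff']
  intro s
  induction s using Finset.strongInduction with
  | _ s ih =>
    intro g hsum m hm
    obtain ⟨m0, hm0s, hmax⟩ := Finset.exists_max_image s pt ⟨m, hm⟩
    have h0 : g m0 = 0 := by
      have hev := congrFun hsum (pt m0)
      have hterm : ∀ i ∈ s, (g i • v i) (pt m0) = if i = m0 then g m0 * v m0 (pt m0) else 0 := by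
        intro i hi
        by_cases hieq : i = m0
        · simp [hieq]
        · have hlt : pt i < pt m0 :=
            lt_of_le_of_ne (hmax i hi) (fun h => hieq (hinj h))
          simp [hieq, htri i m0 hlt]
      rw [Finset.sum_apply, Finset.sum_congr rfl hterm, Finset.sum_ite_eq' s m0] at hev
      simp only [hm0s, if_pos] at hev
      have := hdiag m0
      rcases mul_eq_zero.mp hev with h | h
      · exact h
      · exact absurd h this
    by_cases hmm : m = m0
    · rw [hmm]; exact h0
    · have herase : ∑ i ∈ s.erase m0, g i • v i = 0 := by
        rw [Finset.sum_erase_eq_sub hm0s, hsum, h0, zero_smul, sub_zero]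
      exact ih (s.erase m0) (Finset.erase_ssubset hm0s) g herase m
        (Finset.mem_erase.mpr ⟨hmm, hm⟩)

lemma not_fd_of_lacunary (r : ℕ) (a : ℕ → ℤ → ℂ) (x : ℤ → ℂ)
    (hsol : IsSol r a x) (hlac : Lacunary x) :
    ¬ FiniteDimensional ℂ (solSpace r a) := by
  classical
  -- gap chooser
  have H : ∀ L : ℤ, ∃ p : ℤ × ℤ, (x p.1 ≠ 0 ∧ x p.2 ≠ 0 ∧ p.1 < p.2 ∧
      (∀ k : ℤ, p.1 < k → k < p.2 → x k = 0)) ∧ L < p.2 - p.1 := by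
    intro L
    obtain ⟨i, j, h1, h2, h3, h4, h5⟩ := hlac L
    exact ⟨(i, j), ⟨h1, h2, h3, h5⟩, h4⟩
  choose f hf1 hf2 using H
  -- gap sequence with strictly increasing lengths, all > r
  set g : ℕ → ℤ × ℤ := fun m => Nat.rec (f r) (fun _ p => f (max r (p.2 - p.1))) m with hg
  have hgap : ∀ m, x (g m).1 ≠ 0 ∧ x (g m).2 ≠ 0 ∧ (g m).1 < (g m).2 ∧
      (∀ k : ℤ, (g m).1 < k → k < (g m).2 → x k = 0) := by
    intro m; cases m with
    | zero => exact hf1 r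
    | succ m => exact hf1 _
  have hlen : ∀ m, (r : ℤ) < (g m).2 - (g m).1 := by
    intro m; cases m with
    | zero => exact hf2 r
    | succ m =>
        have := hf2 (max (r:ℤ) ((g m).2 - (g m).1))
        exact lt_of_le_of_lt (le_max_left _ _) this
  have hmono : StrictMono (fun m => (g m).2 - (g m).1) := by
    apply strictMono_nat_of_lt_succ
    intro m
    have := hf2 (max (r:ℤ) ((g m).2 - (g m).1))
    exact lt_of_le_of_lt (le_max_right _ _) this
  -- injectivity of left endpoints
  have hjuniq : ∀ m m', (g m).1 = (g m').1 → (g m).2 = (g m').2 := by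
    intro m m' h1
    obtain ⟨_, hj, hij, hz⟩ := hgap m
    obtain ⟨_, hj', hij', hz'⟩ := hgap m'
    rcases lt_trichotomy (g m).2 (g m').2 with h | h | h
    · exact absurd (hz' _ (h1 ▸ hij) h) hj
    · exact h
    · exact absurd (hz _ (h1.symm ▸ hij') h) hj'
  have hptinj : Function.Injective (fun m => (g m).1) := by
    intro m m' h
    by_contra hne
    have hlenne : (g m).2 - (g m).1 ≠ (g m').2 - (g m').1 := fun hc => hne (hmono.injective hc)
    simp only at h
    exact hlenne (by rw [h, hjuniq m m' h])
  -- truncated solutions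
  set y : ℕ → ℤ → ℂ := fun m => fun n => if n < (g m).1 + 1 then x n else 0 with hy
  have hysol : ∀ m, IsSol r a (y m) := by
    intro m
    apply isSol_trunc hsol
    intro n hn1 hn2
    obtain ⟨_, _, _, hz⟩ := hgap m
    refine hz n (by linarith) ?_
    have := hlen m
    linarith
  have hydiag : ∀ m, y m ((g m).1) ≠ 0 := by
    intro m
    have := (hgap m).1
    simp only [hy]
    rw [if_pos (by linarith)]
    exact this
  have hytri : ∀ m m', (g m).1 < (g m').1 → y m ((g m').1) = 0 := by
    intro m m' h
    simp only [hy]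
    rw [if_neg (by omega)]
  have hind : LinearIndependent ℂ y :=
    linearIndependent_triangular y (fun m => (g m).1) hptinj hydiag hytri
  -- lift to solSpace
  set v : ℕ → ↥(solSpace r a) := fun m => ⟨y m, hysol m⟩ with hv
  have hindv : LinearIndependent ℂ v := by
    have : y = (solSpace r a).subtype ∘ v := rfl
    exact LinearIndependent.of_comp (solSpace r a).subtype (this ▸ hind)
  intro hFD
  have h1 : Module.rank ℂ ↥(solSpace r a) < Cardinal.aleph0 :=
    Module.rank_lt_aleph0 ℂ _
  exact absurd hindv.aleph0_le_rank (not_le.mpr h1)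

/-- If everything in `V` vanishing at finitely many given points lies in `W ≤ V`,
then `W` inherits infinite-dimensionality from `V`. -/
lemma not_fd_of_window {V W : Submodule ℂ (ℤ → ℂ)} (hWV : W ≤ V) (m : ℕ) (g : Fin m → ℤ)
    (hW : ∀ x ∈ V, (∀ i, x (g i) = 0) → x ∈ W) (hV : ¬ FiniteDimensional ℂ V) :
    ¬ FiniteDimensional ℂ W := by
  intro hFD
  apply hV
  set f : ↥V →ₗ[ℂ] (Fin m → ℂ) := (LinearMap.funLeft ℂ ℂ g).comp V.subtype with hf
  have hker : LinearMap.ker f ≤ Submodule.comap V.subtype W := by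
    intro z hz
    have hz' : ∀ i, (z : ℤ → ℂ) (g i) = 0 := by
      intro i
      exact congrFun (LinearMap.mem_ker.mp hz) i
    exact hW z.1 z.2 hz'
  have h1 : FiniteDimensional ℂ (Submodule.comap V.subtype W) :=
    (Submodule.comapSubtypeEquivOfLe hWV).symm.finiteDimensional
  have h2 : FiniteDimensional ℂ (LinearMap.ker f) := Submodule.finiteDimensional_of_le hker
  have h3 : FiniteDimensional ℂ (LinearMap.range f) := inferInstance
  have h4 := LinearMap.rank_range_add_rank_ker f
  have h5 : Module.rank ℂ ↥V < Cardinal.aleph0 := by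
    rw [← h4]
    have h6 : Module.rank ℂ ↥(LinearMap.range f) < Cardinal.aleph0 :=
      Module.rank_lt_aleph0 ℂ ↥(LinearMap.range f)
    have h7 : Module.rank ℂ ↥(LinearMap.ker f) < Cardinal.aleph0 :=
      Module.rank_lt_aleph0 ℂ ↥(LinearMap.ker f)
    exact Cardinal.add_lt_aleph0 h6 h7
  exact Module.rank_lt_aleph0_iff.mp h5

lemma not_fd_or {K A B : Submodule ℂ (ℤ → ℂ)} (hK : ¬ FiniteDimensional ℂ K)
    (hle : K ≤ A ⊔ B) : ¬ FiniteDimensional ℂ A ∨ ¬ FiniteDimensional ℂ B := by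
  by_contra h
  push_neg at h
  obtain ⟨hA, hB⟩ := h
  have : FiniteDimensional ℂ ↥(A ⊔ B) := Submodule.finiteDimensional_sup A B
  exact hK (Submodule.finiteDimensional_of_le hle)

/-- Transfer infinite-dimensionality along a linear equivalence of the ambient space. -/
lemma not_fd_map {W : Submodule ℂ (ℤ → ℂ)} (e : (ℤ → ℂ) ≃ₗ[ℂ] (ℤ → ℂ))
    (h : ¬ FiniteDimensional ℂ W) : ¬ FiniteDimensional ℂ (W.map (e : (ℤ → ℂ) →ₗ[ℂ] (ℤ → ℂ))) := by
  intro hFD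
  exact h ((e.submoduleMap W).symm.finiteDimensional)

lemma mem_solSpace {r : ℕ} {a : ℕ → ℤ → ℂ} {x : ℤ → ℂ} :
    x ∈ solSpace r a ↔ IsSol r a x := Iff.rfl

lemma mem_vanishOn {s : Set ℤ} {x : ℤ → ℂ} :
    x ∈ vanishOn s ↔ ∀ n ∈ s, x n = 0 := Iff.rfl

/-- Main extraction: if all right-supported solution spaces are infinite dimensional,
then there are nonzero finitely supported solutions arbitrarily far to the right. -/
lemma finRight_of_not_fd (r : ℕ) (a : ℕ → ℤ → ℂ)
    (h : ∀ q : ℤ, ¬ FiniteDimensional ℂ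
      ↥(solSpace r a ⊓ vanishOn (Set.Iio q))) :
    ∀ Q : ℤ, ∃ w : ℤ → ℂ, IsSol r a w ∧ w ≠ 0 ∧ (∀ n : ℤ, n < Q → w n = 0) ∧
      ∃ B : ℤ, ∀ n : ℤ, B ≤ n → w n = 0 := by
  classical
  intro Q
  by_contra hno'
  have hno : ∀ w : ℤ → ℂ, IsSol r a w → (∀ n : ℤ, n < Q → w n = 0) →
      (∃ B : ℤ, ∀ n : ℤ, B ≤ n → w n = 0) → w = 0 := by
    intro w h1 h2 h3
    by_contra hw
    exact hno' ⟨w, h1, hw, h2, h3⟩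
  set VQ : Submodule ℂ (ℤ → ℂ) := solSpace r a ⊓ vanishOn (Set.Iio Q) with hVQ
  -- an (r+1)-element linearly independent family in VQ
  have hrank : ((r + 1 : ℕ) : Cardinal) ≤ Module.rank ℂ ↥VQ := by
    have h1 : ¬ (Module.rank ℂ ↥VQ < Cardinal.aleph0) := by
      intro hlt
      exact h Q (Module.rank_lt_aleph0_iff.mp hlt)
    exact le_trans (Cardinal.nat_lt_aleph0 (r+1)).le (not_lt.mp h1)
  obtain ⟨s, hcard, hindep⟩ := le_rank_iff_exists_linearIndependent_finset.mp hrank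
  have hindep' : LinearIndependent ℂ (fun i : {x : ↥VQ // x ∈ s} => (i : ↥VQ)) := hindep
  have hcardι : Fintype.card {x : ↥VQ // x ∈ s} = r + 1 := by
    rw [← hcard]; exact Fintype.card_coe s
  set vv : {x : ↥VQ // x ∈ s} → (ℤ → ℂ) := fun i => ((i : ↥VQ) : ℤ → ℂ) with hvv
  have hu : LinearIndependent ℂ vv :=
    hindep'.map' VQ.subtype (Submodule.ker_subtype VQ)
  set S0 : Submodule ℂ (ℤ → ℂ) := Submodule.span ℂ (Set.range vv) with hS0
  haveI hS0FD : FiniteDimensional ℂ ↥S0 :=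
    FiniteDimensional.span_of_finite ℂ (Set.finite_range vv)
  set T : ℤ → Submodule ℂ (ℤ → ℂ) :=
    fun M => S0 ⊓ (solSpace r a ⊓ vanishOn (Set.Iio M)) with hT
  have hTanti : ∀ M M' : ℤ, M ≤ M' → T M' ≤ T M := by
    intro M M' hMM x hx
    refine ⟨hx.1, hx.2.1, fun n hn => hx.2.2 n ?_⟩
    exact lt_of_lt_of_le hn hMM
  -- key existence step
  have hexist : ∀ M : ℤ, ∃ y : ℤ → ℂ, y ≠ 0 ∧ y ∈ T M := by
    intro M
    set N : ℤ := max M Q with hN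
    have hQN : Q ≤ N := le_max_right _ _
    set ρ : (ℤ → ℂ) →ₗ[ℂ] (Fin r → ℂ) :=
      LinearMap.funLeft ℂ ℂ (fun i : Fin r => N + (i : ℕ)) with hρ
    have hdep : ¬ LinearIndependent ℂ (fun i => ρ (vv i)) := by
      intro hLI
      have hc := hLI.fintype_card_le_finrank
      rw [Module.finrank_fintype_fun_eq_card, Fintype.card_fin] at hc
      rw [hcardι] at hc
      omega
    obtain ⟨c, hcsum, i0, hci0⟩ := Fintype.not_linearIndependent_iff.mp hdep
    set y : ℤ → ℂ := ∑ i, c i • vv i with hy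
    have hy0 : y ≠ 0 := by
      intro h0
      have hz : ∑ i, c i • vv i = 0 := by rw [← hy]; exact h0
      exact hci0 (Fintype.linearIndependent_iff.mp hu c hz i0)
    have hyVQ : y ∈ VQ := by
      apply Submodule.sum_mem
      intro i _
      exact Submodule.smul_mem _ _ (i : ↥VQ).2
    have hysol : IsSol r a y := (Submodule.mem_inf.mp hyVQ).1
    have hyQ : ∀ n : ℤ, n < Q → y n = 0 := fun n hn => (Submodule.mem_inf.mp hyVQ).2 n hn
    have hyS0 : y ∈ S0 := by
      apply Submodule.sum_mem
      intro i _
      exact Submodule.smul_mem _ _ (Submodule.subset_span ⟨i, rfl⟩)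
    have hρy : ρ y = 0 := by
      rw [hy, map_sum]
      simpa only [map_smul] using hcsum
    have hwin : ∀ n : ℤ, N ≤ n → n < N + r → y n = 0 := by
      intro n h1 h2
      have hi : (n - N).toNat < r := by omega
      have := congrFun hρy (⟨(n - N).toNat, hi⟩ : Fin r)
      rw [hρ] at this
      simp only [LinearMap.funLeft_apply, Pi.zero_apply] at this
      have harg : N + ((n - N).toNat : ℤ) = n := by omega
      rwa [harg] at this
    set low : ℤ → ℂ := fun n => if n < N then y n else 0 with hlow
    have hlow0 : low = 0 := by
      apply hno low (isSol_trunc hysol N hwin)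
      · intro n hn
        simp only [hlow]
        by_cases h' : n < N
        · rw [if_pos h']; exact hyQ n hn
        · rw [if_neg h']
      · exact ⟨N, fun n hn => by simp only [hlow]; rw [if_neg (not_lt.mpr hn)]⟩
    have hylow : ∀ n : ℤ, n < N → y n = 0 := by
      intro n hn
      have := congrFun hlow0 n
      simpa only [hlow, if_pos hn, Pi.zero_apply] using this
    refine ⟨y, hy0, hyS0, hysol, fun n hn => ?_⟩
    by_cases h' : n < N
    · exact hylow n h'
    · refine hwin n (not_lt.mp h') ?_
      calc n < M := hn
      _ ≤ N := le_max_left _ _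
      _ ≤ N + r := by omega
  -- the chain stabilizes
  have hTFD : ∀ M, FiniteDimensional ℂ ↥(T M) :=
    fun M => Submodule.finiteDimensional_of_le inf_le_left
  set D : Set ℕ := {k | ∃ M : ℤ, Module.finrank ℂ ↥(T M) = k} with hD
  have hDne : D.Nonempty := ⟨_, ⟨0, rfl⟩⟩
  obtain ⟨M0, hM0⟩ : ∃ M0 : ℤ, Module.finrank ℂ ↥(T M0) = sInf D := Nat.sInf_mem hDne
  have heq : ∀ M : ℤ, M0 ≤ M → T M = T M0 := by
    intro M hM
    haveI := hTFD M0
    apply Submodule.eq_of_le_of_finrank_le (hTanti M0 M hM)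
    rw [hM0]
    exact Nat.sInf_le ⟨M, rfl⟩
  obtain ⟨y0, hy0ne, hy0mem⟩ := hexist M0
  apply hy0ne
  funext n
  have hmem : y0 ∈ T (max M0 (n + 1)) := by
    rw [heq _ (le_max_left _ _)]
    exact hy0mem
  have := hmem.2.2 n
    (Set.mem_Iio.mpr (lt_of_lt_of_le (by omega : n < n + 1) (le_max_right _ _)))
  simpa using this

lemma lacunary_of_finRight (r : ℕ) (a : ℕ → ℤ → ℂ)
    (h : ∀ Q : ℤ, ∃ w : ℤ → ℂ, IsSol r a w ∧ w ≠ 0 ∧ (∀ n : ℤ, n < Q → w n = 0) ∧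
      ∃ B : ℤ, ∀ n : ℤ, B ≤ n → w n = 0) :
    ∃ x : ℤ → ℂ, IsSol r a x ∧ Lacunary x := by
  classical
  choose w hsol hne hlow B hhigh using h
  set G : ℕ → ℤ := fun m => (r : ℤ) + 2 + m with hG
  -- the left endpoints of the pieces
  set Qs : ℕ → ℤ := fun m =>
    Nat.rec 0 (fun m Q => max (B Q) (Q + 1) + G m) m with hQs
  set U : ℕ → ℤ := fun m => max (B (Qs m)) (Qs m + 1) with hU
  have hQsucc : ∀ m, Qs (m + 1) = U m + G m := fun m => rfl
  have hGpos : ∀ m, 0 < G m := by intro m; simp only [hG]; positivity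
  have hQU : ∀ m, Qs m < U m := fun m => lt_of_lt_of_le (by omega) (le_max_right _ _)
  have hUQ : ∀ m, U m < Qs (m + 1) := by
    intro m; rw [hQsucc m]; have := hGpos m; omega
  have hmono : StrictMono Qs := by
    apply strictMono_nat_of_lt_succ
    intro m
    exact lt_trans (hQU m) (hUQ m)
  -- support bounds for the pieces
  have hsupp : ∀ m n, w (Qs m) n ≠ 0 → Qs m ≤ n ∧ n < U m := by
    intro m n hn
    constructor
    · by_contra hc
      exact hn (hlow (Qs m) n (by omega))
    · by_contra hc
      push_neg at hc
      refine hn (hhigh (Qs m) n ?_)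
      exact le_trans (le_max_left _ _) hc
  -- disjointness / uniqueness of the supporting piece
  have huniq : ∀ m m' n, w (Qs m) n ≠ 0 → w (Qs m') n ≠ 0 → m = m' := by
    intro m m' n h1 h2
    by_contra hne'
    rcases Nat.lt_or_ge m m' with hlt | hge
    · have hb1 := (hsupp m n h1).2
      have hb2 := (hsupp m' n h2).1
      have : Qs (m + 1) ≤ Qs m' := hmono.le_iff_le.mpr hlt
      have := hUQ m
      omega
    · have hlt : m' < m := by omega
      have hb1 := (hsupp m' n h2).2
      have hb2 := (hsupp m n h1).1
      have : Qs (m' + 1) ≤ Qs m := hmono.le_iff_le.mpr hlt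
      have := hUQ m'
      omega
  set x : ℤ → ℂ := fun n => if hn : ∃ m : ℕ, w (Qs m) n ≠ 0 then w (Qs hn.choose) n else 0
    with hx
  have hx_eq : ∀ m n, w (Qs m) n ≠ 0 → x n = w (Qs m) n := by
    intro m n hn
    have hex : ∃ m : ℕ, w (Qs m) n ≠ 0 := ⟨m, hn⟩
    simp only [hx, dif_pos hex]
    rw [huniq hex.choose m n hex.choose_spec hn]
  have hx_ne : ∀ n, x n ≠ 0 → ∃ m, w (Qs m) n ≠ 0 ∧ x n = w (Qs m) n := by
    intro n hn
    by_cases hex : ∃ m : ℕ, w (Qs m) n ≠ 0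
    · exact ⟨hex.choose, hex.choose_spec, hx_eq _ _ hex.choose_spec⟩
    · exfalso; apply hn; simp only [hx, dif_neg hex]
  refine ⟨x, ?_, ?_⟩
  · -- x is a solution
    intro n
    by_cases hc : ∃ m : ℕ, ∃ k ∈ Finset.range (r + 1), w (Qs m) (n + k) ≠ 0
    · obtain ⟨m, k0, hk0r, hk0⟩ := hc
      have hagree : ∀ k ∈ Finset.range (r + 1), x (n + (k:ℤ)) = w (Qs m) (n + (k:ℤ)) := by
        intro k hk
        by_cases h1 : w (Qs m) (n + (k:ℤ)) ≠ 0
        · exact hx_eq m _ h1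
        · push_neg at h1
          rw [h1]
          by_contra hxne
          obtain ⟨m'', hm''ne, hm''⟩ := hx_ne _ hxne
          have hmm : m'' ≠ m := by
            intro hc'; rw [hc'] at hm''ne; exact hm''ne h1
          have hs0 := hsupp m _ hk0
          have hs2 := hsupp m'' _ hm''ne
          have hk0b : (k0 : ℤ) ≤ r := by
            have := Finset.mem_range.mp hk0r; omega
          have hkb : (k : ℤ) ≤ r := by
            have := Finset.mem_range.mp hk; omega
          rcases Nat.lt_or_ge m m'' with hlt | hge
          · have hst : Qs (m + 1) ≤ Qs m'' := hmono.le_iff_le.mpr hlt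
            rw [hQsucc m] at hst
            simp only [hG] at hst
            have hk00 : (0:ℤ) ≤ k0 := Int.natCast_nonneg _
            have hk01 : (0:ℤ) ≤ k := Int.natCast_nonneg _
            omega
          · have hlt : m'' < m := lt_of_le_of_ne hge hmm
            have hst : Qs (m'' + 1) ≤ Qs m := hmono.le_iff_le.mpr hlt
            rw [hQsucc m''] at hst
            simp only [hG] at hst
            have hk00 : (0:ℤ) ≤ k0 := Int.natCast_nonneg _
            have hk01 : (0:ℤ) ≤ k := Int.natCast_nonneg _
            omega
      calc ∑ k ∈ Finset.range (r + 1), a k n * x (n + k)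
          = ∑ k ∈ Finset.range (r + 1), a k n * w (Qs m) (n + k) := by
            refine Finset.sum_congr rfl fun k hk => ?_
            rw [hagree k hk]
        _ = 0 := hsol (Qs m) n
    · push_neg at hc
      apply Finset.sum_eq_zero
      intro k hk
      have hxz : x (n + (k:ℤ)) = 0 := by
        by_contra hxne
        obtain ⟨m'', hm''ne, _⟩ := hx_ne _ hxne
        exact hm''ne (hc m'' k hk)
      rw [hxz, mul_zero]
  · -- x is lacunary
    intro L
    set m : ℕ := L.toNat with hm
    have hLm : L ≤ (m : ℤ) := Int.self_le_toNat L
    -- greatest support point of piece m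
    have hPne : ∃ n : ℤ, w (Qs m) n ≠ 0 := by
      by_contra hcon
      push_neg at hcon
      exact hne (Qs m) (funext fun n => hcon n)
    obtain ⟨i, hiP, hiub⟩ := Int.exists_greatest_of_bdd
      ⟨U m, fun z hz => (le_of_lt (hsupp m z hz).2)⟩ hPne
    -- least support point of piece m+1
    have hPne' : ∃ n : ℤ, w (Qs (m+1)) n ≠ 0 := by
      by_contra hcon
      push_neg at hcon
      exact hne (Qs (m+1)) (funext fun n => hcon n)
    obtain ⟨j, hjP, hjlb⟩ := Int.exists_least_of_bdd
      ⟨Qs (m+1), fun z hz => (hsupp (m+1) z hz).1⟩ hPne'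
    have hij : i < U m := (hsupp m i hiP).2
    have hQj : Qs (m + 1) ≤ j := (hsupp (m+1) j hjP).1
    have hQi : Qs m ≤ i := (hsupp m i hiP).1
    have hjU : j < U (m+1) := (hsupp (m+1) j hjP).2
    refine ⟨i, j, ?_, ?_, ?_, ?_, ?_⟩
    · rw [hx_eq m i hiP]; exact hiP
    · rw [hx_eq (m+1) j hjP]; exact hjP
    · have := hUQ m; omega
    · have h1 : U m + G m ≤ j := by rw [← hQsucc m]; exact hQj
      simp only [hG] at h1
      omega
    · intro k hik hkj
      by_contra hxk
      obtain ⟨m'', hm''ne, _⟩ := hx_ne _ hxk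
      have hs := hsupp m'' k hm''ne
      rcases Nat.lt_or_ge m'' m with hlt | hge
      · have : Qs (m'' + 1) ≤ Qs m := hmono.le_iff_le.mpr hlt
        have := hUQ m''
        omega
      · rcases Nat.eq_or_lt_of_le hge with heq | hlt
        · rw [← heq] at hm''ne
          have := hiub k hm''ne
          omega
        · rcases Nat.eq_or_lt_of_le hlt with heq | hlt'
          · rw [← heq] at hm''ne
            have := hjlb k hm''ne
            omega
          · have h1 : Qs (m + 2) ≤ Qs m'' := hmono.le_iff_le.mpr hlt'
            have h2 : U (m+1) < Qs (m + 2) := hUQ (m+1)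
            omega

noncomputable def mirL : (ℤ → ℂ) ≃ₗ[ℂ] (ℤ → ℂ) where
  toFun x := fun n => x (-n)
  invFun x := fun n => x (-n)
  map_add' _ _ := rfl
  map_smul' _ _ := rfl
  left_inv x := funext fun n => by simp
  right_inv x := funext fun n => by simp

lemma lacunary_mir {x : ℤ → ℂ} (h : Lacunary x) : Lacunary (fun n => x (-n)) := by
  intro L
  obtain ⟨i, j, h1, h2, h3, h4, h5⟩ := h L
  refine ⟨-j, -i, by simpa using h2, by simpa using h1, by omega, by omega,
    fun k hk1 hk2 => ?_⟩
  simpa using h5 (-k) (by omega) (by omega)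

/-- Step 1: splitting at a window of `r` consecutive zeros. -/
lemma split_lemma (r : ℕ) (a : ℕ → ℤ → ℂ)
    (hNFD : ¬ FiniteDimensional ℂ (solSpace r a)) :
    ¬ FiniteDimensional ℂ ↥(solSpace r a ⊓ vanishOn (Set.Ici (0:ℤ))) ∨
    ¬ FiniteDimensional ℂ ↥(solSpace r a ⊓ vanishOn (Set.Iio (r:ℤ))) := by
  set K : Submodule ℂ (ℤ → ℂ) := solSpace r a ⊓ vanishOn (Set.Ico (0:ℤ) (r:ℤ)) with hK
  have hKnfd : ¬ FiniteDimensional ℂ K := by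
    refine not_fd_of_window (V := solSpace r a) inf_le_left r
      (fun i : Fin r => ((i : ℕ) : ℤ)) ?_ hNFD
    intro x hx hzero
    refine ⟨hx, fun n hn => ?_⟩
    obtain ⟨hn0, hnr⟩ := hn
    have hlt : n.toNat < r := by omega
    have := hzero ⟨n.toNat, hlt⟩
    simpa [Int.toNat_of_nonneg hn0] using this
  refine not_fd_or hKnfd ?_
  intro x hx
  obtain ⟨hxsol, hxvan⟩ := hx
  set y : ℤ → ℂ := fun n => if n < 0 then x n else 0 with hy
  have hysol : IsSol r a y := by
    apply isSol_trunc hxsol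
    intro n hn1 hn2
    exact hxvan n ⟨hn1, by omega⟩
  rw [Submodule.mem_sup]
  refine ⟨y, ⟨hysol, fun n hn => ?_⟩, x - y, ⟨?_, fun n hn => ?_⟩, by funext n; simp⟩
  · simp only [hy]
    rw [if_neg (not_lt.mpr hn)]
  · exact Submodule.sub_mem _ hxsol hysol
  · simp only [Set.mem_Iio] at hn
    simp only [Pi.sub_apply, hy]
    by_cases h0 : n < 0
    · rw [if_pos h0]; ring
    · rw [if_neg h0]
      have : x n = 0 := hxvan n ⟨not_lt.mp h0, hn⟩
      rw [this]; ring
lemma not_fd_plus_mono (r : ℕ) (a : ℕ → ℤ → ℂ) (q0 : ℤ)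
    (h : ¬ FiniteDimensional ℂ ↥(solSpace r a ⊓ vanishOn (Set.Iio q0))) :
    ∀ q : ℤ, ¬ FiniteDimensional ℂ ↥(solSpace r a ⊓ vanishOn (Set.Iio q)) := by
  have hstep : ∀ q : ℤ, ¬ FiniteDimensional ℂ ↥(solSpace r a ⊓ vanishOn (Set.Iio q)) →
      ¬ FiniteDimensional ℂ ↥(solSpace r a ⊓ vanishOn (Set.Iio (q+1))) := by
    intro q hq
    refine not_fd_of_window (V := solSpace r a ⊓ vanishOn (Set.Iio q)) ?_ 1 (fun _ => q) ?_ hq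
    · intro x hx
      exact ⟨hx.1, fun n hn => hx.2 n (by simp only [Set.mem_Iio] at hn ⊢; omega)⟩
    · intro x hx hzero
      refine ⟨hx.1, fun n hn => ?_⟩
      simp only [Set.mem_Iio] at hn
      by_cases h' : n < q
      · exact hx.2 n h'
      · have : n = q := by omega
        rw [this]; exact hzero 0
  have hup : ∀ k : ℕ, ¬ FiniteDimensional ℂ ↥(solSpace r a ⊓ vanishOn (Set.Iio (q0 + k))) := by
    intro k
    induction k with
    | zero =>
        have harg : q0 + ((0:ℕ):ℤ) = q0 := by push_cast; ring
        rwa [harg]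
    | succ k ih =>
        have := hstep (q0 + k) ih
        have harg : q0 + (k:ℤ) + 1 = q0 + ((k+1 : ℕ) : ℤ) := by push_cast; ring
        rwa [harg] at this
  intro q
  intro hFD
  apply hup (q - q0).toNat
  have hle : (solSpace r a ⊓ vanishOn (Set.Iio (q0 + ((q - q0).toNat : ℤ))))
      ≤ (solSpace r a ⊓ vanishOn (Set.Iio q)) := by
    intro x hx
    refine ⟨hx.1, fun n hn => hx.2 n ?_⟩
    simp only [Set.mem_Iio] at hn ⊢
    omega
  exact Submodule.finiteDimensional_of_le hle

lemma mir_map_eq (r : ℕ) (a : ℕ → ℤ → ℂ) :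
    (solSpace r a ⊓ vanishOn (Set.Ici (0:ℤ))).map (mirL : (ℤ → ℂ) →ₗ[ℂ] (ℤ → ℂ))
      = (solSpace r (mirC r a) ⊓ vanishOn (Set.Iio (1:ℤ))) := by
  ext y
  simp only [Submodule.mem_map]
  constructor
  · rintro ⟨x, hx, rfl⟩
    refine ⟨isSol_mir hx.1, fun n hn => ?_⟩
    simp only [Set.mem_Iio] at hn
    exact hx.2 (-n) (by simp only [Set.mem_Ici]; omega)
  · intro hy
    refine ⟨fun n => y (-n), ⟨isSol_unmir hy.1, fun n hn => ?_⟩, ?_⟩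
    · simp only [Set.mem_Ici] at hn
      exact hy.2 (-n) (by simp only [Set.mem_Iio]; omega)
    · funext n
      show y (- -n) = y n
      rw [neg_neg]

/-- Main theorem -/
theorem main_criterion (r : ℕ) (hr : 1 ≤ r) (a : ℕ → ℤ → ℂ) :
    ¬ FiniteDimensional ℂ (solSpace r a) ↔
      ∃ x : ℤ → ℂ, IsSol r a x ∧ Lacunary x := by
  constructor
  · intro hNFD
    rcases split_lemma r a hNFD with hL | hR
    · have h1 : ¬ FiniteDimensional ℂ ↥(solSpace r (mirC r a) ⊓ vanishOn (Set.Iio (1:ℤ))) := by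
        rw [← mir_map_eq r a]
        exact not_fd_map mirL hL
      have h2 := not_fd_plus_mono r (mirC r a) 1 h1
      obtain ⟨y, hy1, hy2⟩ :=
        lacunary_of_finRight r (mirC r a) (finRight_of_not_fd r (mirC r a) h2)
      exact ⟨fun n => y (-n), isSol_unmir hy1, lacunary_mir hy2⟩
    · have h2 := not_fd_plus_mono r a r hR
      exact lacunary_of_finRight r a (finRight_of_not_fd r a h2)
  · rintro ⟨x, h1, h2⟩
    exact not_fd_of_lacunary r a x h1 h2
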